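/- If every eigenvalue λᵢ of D_ρ is nonzero and H^λ(b_ρ(Φ)) = S(Φ(D_ρ)), then Φ(D_ρ) = (1/n)·I, so S(Φ(D_ρ)) = log n, and the bistochastic matrix b_ρ(Φ) has all entries equal to 1/n. -/

import Mathlib

open Matrix BigOperators ComplexOrder

/-- Entropy function `η(t) = -t log t` (with `η(0)=0` since `Real.log 0 = 0`). -/
noncomputable def eta (t : ℝ) : ℝ := -(t * Real.log t)

/-- Von Neumann entropy of a matrix: sum of `η` over eigenvalues (0 if not Hermitian). -/
noncomputable def vnEntropy {n : ℕ} (D : Matrix (Fin n) (Fin n) ℂ) : ℝ :=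
  if h : D.IsHermitian then ∑ i, eta (h.eigenvalues i) else 0

/-- Positive, unital, trace-preserving linear map on `M_n(ℂ)`. -/
def IsPUTP {n : ℕ} (Φ : Matrix (Fin n) (Fin n) ℂ →ₗ[ℂ] Matrix (Fin n) (Fin n) ℂ) : Prop :=
  (∀ x, x.PosSemidef → (Φ x).PosSemidef) ∧ Φ 1 = 1 ∧ ∀ x, (Φ x).trace = x.trace

/-- A family of mutually orthogonal rank-one (trace-one) self-adjoint projections
summing to the identity. -/
def IsSpectralFamily {n : ℕ} (e : Fin n → Matrix (Fin n) (Fin n) ℂ) : Prop :=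
  (∀ i, (e i).IsHermitian) ∧ (∀ i j, e i * e j = if i = j then e i else 0) ∧
    (∑ i, e i = 1) ∧ (∀ i, (e i).trace = 1)

namespace Stmt18Aux

open Polynomial

variable {n : ℕ}

lemma psd_trace_re_nonneg (M : Matrix (Fin n) (Fin n) ℂ) (hM : M.PosSemidef) :
    0 ≤ M.trace.re := by
  have hdiag : ∀ i, 0 ≤ (M i i).re := by
    intro i
    exact (Complex.le_def.mp hM.diag_nonneg).1
  rw [Matrix.trace]
  simpa using Finset.sum_nonneg fun i _ => hdiag i

lemma trace_mul_psd_nonneg (A B : Matrix (Fin n) (Fin n) ℂ)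
    (hA : A.PosSemidef) (hB : B.PosSemidef) : 0 ≤ ((A * B).trace).re := by
  open scoped MatrixOrder in
  obtain ⟨C, rfl⟩ := CStarAlgebra.nonneg_iff_eq_star_mul_self.mp hB.nonneg
  have h3 : (A * (star C * C)).trace = (C * A * Cᴴ).trace := by
    rw [star_eq_conjTranspose, ← mul_assoc, Matrix.trace_mul_cycle]
  rw [h3]; exact psd_trace_re_nonneg _ (hA.mul_mul_conjTranspose_same C)

lemma charpoly_conj_unit (U A : Matrix (Fin n) (Fin n) ℂ) (hU : U * Uᴴ = 1) :
    (U * A * Uᴴ).charpoly = A.charpoly := by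
  have hcomm : ∀ M : Matrix (Fin n) (Fin n) ℂ[X],
      M * scalar (Fin n) X = scalar (Fin n) X * M := fun M =>
    (scalar_commute (X : ℂ[X]) (fun r' => Commute.all _ _) M).eq.symm
  have key : charmatrix (U * A * Uᴴ) =
      C.mapMatrix U * charmatrix A * C.mapMatrix Uᴴ := by
    unfold charmatrix
    rw [mul_sub, sub_mul, hcomm]
    congr 1
    · rw [mul_assoc, ← _root_.map_mul, hU, RingHom.map_one, mul_one]
    · rw [_root_.map_mul, _root_.map_mul]
  have hdet : (C.mapMatrix U).det * (C.mapMatrix Uᴴ).det = 1 := by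
    rw [← det_mul, ← _root_.map_mul, hU, RingHom.map_one, det_one]
  have : (U * A * Uᴴ).charpoly
      = (C.mapMatrix U).det * (C.mapMatrix Uᴴ).det * (charmatrix A).det := by
    rw [Matrix.charpoly, key, det_mul, det_mul]; ring
  rw [this, hdet, one_mul, Matrix.charpoly]

lemma charpoly_diag (d : Fin n → ℂ) :
    (diagonal d).charpoly = ∏ i, (X - C (d i)) := by
  rw [Matrix.charpoly]
  have : charmatrix (diagonal d) = diagonal fun i => X - C (d i) := by
    apply Matrix.ext; intro i j
    by_cases h : i = j
    · subst h; simp [charmatrix_apply_eq]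
    · rw [charmatrix_apply_ne _ _ _ h, diagonal_apply_ne _ h, diagonal_apply_ne _ h, map_zero,
        neg_zero]
  rw [this, det_diagonal]

lemma exists_unit_eigvec (q : Matrix (Fin n) (Fin n) ℂ) (hq : q * q = q) (htr : q.trace = 1) :
    ∃ v : Fin n → ℂ, q *ᵥ v = v ∧ star v ⬝ᵥ v = 1 := by
  have hq0 : q ≠ 0 := by rintro rfl; simp [Matrix.trace] at htr
  have : ∃ i k, q i k ≠ 0 := by
    by_contra h; push_neg at h; exact hq0 (by ext i k; exact h i k)
  obtain ⟨i0, k, hik⟩ := this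
  set u : Fin n → ℂ := fun i => q i k with hu
  have hqu : q *ᵥ u = u := by
    ext i
    have := congrFun (congrFun hq i) k
    simpa [Matrix.mul_apply, mulVec, dotProduct, hu] using this
  set s : ℝ := ∑ i, Complex.normSq (u i) with hs
  have hspos : 0 < s := by
    apply Finset.sum_pos' (fun i _ => Complex.normSq_nonneg _)
    exact ⟨i0, Finset.mem_univ _, by simpa [hu, Complex.normSq_pos] using hik⟩
  have hdot : star u ⬝ᵥ u = (s : ℂ) := by
    simp only [dotProduct, Pi.star_apply, hs]
    push_cast
    congr 1; ext i
    rw [Complex.normSq_eq_conj_mul_self]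
    rfl
  refine ⟨(((Real.sqrt s)⁻¹ : ℝ) : ℂ) • u, by rw [mulVec_smul, hqu], ?_⟩
  rw [star_smul, smul_dotProduct, dotProduct_smul, hdot]
  simp only [Complex.star_def, Complex.conj_ofReal, smul_eq_mul]
  norm_cast
  rw [← mul_assoc, ← mul_inv, Real.mul_self_sqrt hspos.le]
  exact inv_mul_cancel₀ hspos.ne'

lemma spectral_family_unitary {p : Fin n → Matrix (Fin n) (Fin n) ℂ} (hp : IsSpectralFamily p) :
    ∃ v : Fin n → Fin n → ℂ, (∀ j, p j *ᵥ v j = v j) ∧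
      ∀ i j, star (v i) ⬝ᵥ v j = if i = j then 1 else 0 := by
  obtain ⟨hherm, horth, hsum, htr⟩ := hp
  have h := fun j => exists_unit_eigvec (p j) (by simpa using horth j j) (htr j)
  choose v hv1 hv2 using h
  refine ⟨v, hv1, fun i j => ?_⟩
  by_cases hij : i = j
  · subst hij; simp [hv2 i]
  · rw [if_neg hij]
    calc star (v i) ⬝ᵥ v j = star (p i *ᵥ v i) ⬝ᵥ (p j *ᵥ v j) := by rw [hv1, hv1]
      _ = star (v i) ⬝ᵥ ((p i)ᴴ *ᵥ (p j *ᵥ v j)) := by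
          rw [star_mulVec, ← dotProduct_mulVec]
      _ = star (v i) ⬝ᵥ ((p i * p j) *ᵥ v j) := by rw [(hherm i).eq, mulVec_mulVec]
      _ = 0 := by rw [horth i j, if_neg hij, zero_mulVec, dotProduct_zero]

lemma charpoly_spectral_sum {p : Fin n → Matrix (Fin n) (Fin n) ℂ} (hp : IsSpectralFamily p)
    (μ : Fin n → ℝ) :
    (∑ j, (μ j : ℂ) • p j).charpoly = ∏ j, (X - C ((μ j : ℂ))) := by
  obtain ⟨v, hv1, hv2⟩ := spectral_family_unitary hp
  set A := ∑ j, (μ j : ℂ) • p j with hA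
  set U : Matrix (Fin n) (Fin n) ℂ := Matrix.of (fun i j => v j i) with hU
  have hUU : Uᴴ * U = 1 := by
    ext i j
    simpa [Matrix.mul_apply, conjTranspose_apply, dotProduct, Matrix.one_apply, hU]
      using hv2 i j
  have hUU' : U * Uᴴ = 1 := mul_eq_one_comm.mp hUU
  have hmul : ∀ j, A *ᵥ v j = (μ j : ℂ) • v j := by
    intro j
    have hsplit : A *ᵥ v j = ∑ k, ((μ k : ℂ) • p k) *ᵥ v j := by
      ext i
      simp only [hA, mulVec, dotProduct, Matrix.sum_apply, Finset.sum_mul, Finset.sum_apply]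
      rw [Finset.sum_comm]
    rw [hsplit]
    have : ∀ k, ((μ k : ℂ) • p k) *ᵥ v j = if k = j then (μ j : ℂ) • v j else 0 := by
      intro k
      rw [smul_mulVec]
      conv_lhs => rw [← hv1 j, mulVec_mulVec, hp.2.1 k j]
      by_cases h : k = j
      · subst h; simp [mulVec_mulVec, hv1 k]
      · simp [h]
    rw [Finset.sum_congr rfl (fun k _ => this k), Finset.sum_ite_eq' Finset.univ j]
    simp
  have hAU : A * U = U * diagonal (fun j => (μ j : ℂ)) := by
    ext i j
    have h1 : (A * U) i j = (A *ᵥ v j) i := by simp [Matrix.mul_apply, mulVec, dotProduct, hU]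
    rw [h1, hmul j, Matrix.mul_diagonal]
    simp [hU, mul_comm]
  have hAdec : A = U * diagonal (fun j => (μ j : ℂ)) * Uᴴ := by
    calc A = A * (U * Uᴴ) := by rw [hUU', mul_one]
      _ = (A * U) * Uᴴ := by rw [mul_assoc]
      _ = U * diagonal (fun j => (μ j : ℂ)) * Uᴴ := by rw [hAU]
  rw [hAdec, charpoly_conj_unit U _ hUU', charpoly_diag]

lemma charpoly_hermitian (A : Matrix (Fin n) (Fin n) ℂ) (hA : A.IsHermitian) :
    A.charpoly = ∏ i, (X - C ((hA.eigenvalues i : ℂ))) := by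
  have hV : (hA.eigenvectorUnitary : Matrix (Fin n) (Fin n) ℂ) *
      (hA.eigenvectorUnitary : Matrix (Fin n) (Fin n) ℂ)ᴴ = 1 := by
    rw [← star_eq_conjTranspose]
    exact (Matrix.mem_unitaryGroup_iff).mp hA.eigenvectorUnitary.2
  conv_lhs => rw [hA.spectral_theorem]
  rw [Unitary.conjStarAlgAut_apply, star_eq_conjTranspose, charpoly_conj_unit _ _ hV, charpoly_diag]
  rfl

lemma eig_multiset {p : Fin n → Matrix (Fin n) (Fin n) ℂ} (hp : IsSpectralFamily p)
    (μ : Fin n → ℝ) (hA : (∑ j, (μ j : ℂ) • p j).IsHermitian) (f : ℝ → ℝ) :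
    ∑ i, f (hA.eigenvalues i) = ∑ j, f (μ j) := by
  have h1 := charpoly_hermitian _ hA
  have h2 := charpoly_spectral_sum hp μ
  have key : (Finset.univ.val.map fun i => ((hA.eigenvalues i : ℂ)))
      = Finset.univ.val.map fun j => ((μ j : ℂ)) := by
    have e1 : ((Finset.univ.val.map fun i => ((hA.eigenvalues i : ℂ))).map
        fun a => X - C a).prod = ∏ i, (X - C ((hA.eigenvalues i : ℂ))) := by
      rw [Multiset.map_map]; rfl
    have e2 : ((Finset.univ.val.map fun j => ((μ j : ℂ))).map
        fun a => X - C a).prod = ∏ j, (X - C ((μ j : ℂ))) := by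
      rw [Multiset.map_map]; rfl
    calc (Finset.univ.val.map fun i => ((hA.eigenvalues i : ℂ)))
        = ((Finset.univ.val.map fun i => ((hA.eigenvalues i : ℂ))).map
            fun a => X - C a).prod.roots := (roots_multiset_prod_X_sub_C _).symm
      _ = ((Finset.univ.val.map fun j => ((μ j : ℂ))).map fun a => X - C a).prod.roots := by
          rw [e1, e2, ← h1, ← h2]
      _ = _ := roots_multiset_prod_X_sub_C _
  have key3 : (Finset.univ.val.map fun i => f (hA.eigenvalues i))
      = (Finset.univ.val.map fun j => f (μ j)) := by
    have h5 := congrArg (Multiset.map fun z : ℂ => f z.re) key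
    rw [Multiset.map_map, Multiset.map_map] at h5
    simpa [Function.comp, Complex.ofReal_re] using h5
  calc ∑ i, f (hA.eigenvalues i)
      = (Finset.univ.val.map fun i => f (hA.eigenvalues i)).sum := Finset.sum_eq_multiset_sum _ _
    _ = (Finset.univ.val.map fun j => f (μ j)).sum := congrArg Multiset.sum key3
    _ = ∑ j, f (μ j) := (Finset.sum_eq_multiset_sum _ _).symm

lemma eta_eq_negMulLog : eta = Real.negMulLog := by
  funext x
  show -(x * Real.log x) = Real.negMulLog x
  simp [Real.negMulLog, neg_mul]

end Stmt18Aux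

open Stmt18Aux in
theorem stmt_18 {n : ℕ} (Φ : Matrix (Fin n) (Fin n) ℂ →ₗ[ℂ] Matrix (Fin n) (Fin n) ℂ)
    (hΦ : IsPUTP Φ)
    (D : Matrix (Fin n) (Fin n) ℂ) (hD : D.PosSemidef) (htr : D.trace = 1)
    (lam mu : Fin n → ℝ) (e p : Fin n → Matrix (Fin n) (Fin n) ℂ)
    (he : IsSpectralFamily e) (hp : IsSpectralFamily p)
    (hDdec : D = ∑ i, (lam i : ℂ) • e i)
    (hΦDdec : Φ D = ∑ j, (mu j : ℂ) • p j)
    (b : Fin n → Fin n → ℝ)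
    (hb : ∀ i j, (b i j : ℂ) = (Φ (e i) * p j).trace)
    (hpos : ∀ i, lam i ≠ 0)
    (heq : (∑ i, lam i * ∑ j, eta (b i j)) = vnEntropy (Φ D)) :
    Φ D = ((n : ℂ)⁻¹) • 1 ∧ vnEntropy (Φ D) = Real.log n ∧
      ∀ i j, b i j = (n : ℝ)⁻¹ := by
  obtain ⟨hΦpos, hΦ1, hΦtr⟩ := hΦ
  obtain ⟨heH, heO, heS, heT⟩ := he
  obtain ⟨hpH, hpO, hpS, hpT⟩ := hp
  -- degenerate case n = 0
  rcases Nat.eq_zero_or_pos n with hn0 | hn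
  · subst hn0
    refine ⟨Subsingleton.elim _ _, ?_, fun i => i.elim0⟩
    rw [show ((0 : ℕ) : ℝ) = 0 by norm_num, Real.log_zero]
    unfold vnEntropy
    split <;> simp
  have hnR : (0 : ℝ) < n := by exact_mod_cast hn
  -- positive semidefiniteness of family members
  have hePSD : ∀ i, (e i).PosSemidef := fun i => by
    have hsq : e i * e i = e i := by simpa using heO i i
    have : e i = (e i)ᴴ * e i := by rw [(heH i).eq]; exact hsq.symm
    rw [this]; exact posSemidef_conjTranspose_mul_self _
  have hpPSD : ∀ j, (p j).PosSemidef := fun j => by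
    have hsq : p j * p j = p j := by simpa using hpO j j
    have : p j = (p j)ᴴ * p j := by rw [(hpH j).eq]; exact hsq.symm
    rw [this]; exact posSemidef_conjTranspose_mul_self _
  -- b entries nonnegative
  have hbnn : ∀ i j, 0 ≤ b i j := by
    intro i j
    have h1 : b i j = ((Φ (e i) * p j).trace).re := by
      rw [← hb i j]; simp
    rw [h1]
    exact trace_mul_psd_nonneg _ _ (hΦpos _ (hePSD i)) (hpPSD j)
  -- column sums equal 1
  have hcol : ∀ j, ∑ i, b i j = 1 := by
    intro j
    have hC : (∑ i, (b i j : ℂ)) = 1 := by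
      calc (∑ i, (b i j : ℂ)) = ∑ i, (Φ (e i) * p j).trace := by
            exact Finset.sum_congr rfl fun i _ => hb i j
        _ = ((∑ i, Φ (e i)) * p j).trace := by rw [Finset.sum_mul, trace_sum]
        _ = ((Φ (∑ i, e i)) * p j).trace := by rw [map_sum]
        _ = (p j).trace := by rw [heS, hΦ1, one_mul]
        _ = 1 := hpT j
    have : ((∑ i, b i j : ℝ) : ℂ) = ((1 : ℝ) : ℂ) := by push_cast; push_cast at hC; exact hC
    exact_mod_cast this
  -- sum of lambdas is 1
  have hlamsum : ∑ i, lam i = 1 := by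
    have hC : (∑ i, (lam i : ℂ)) = 1 := by
      calc (∑ i, (lam i : ℂ)) = ∑ i, ((lam i : ℂ) • e i).trace := by
            refine Finset.sum_congr rfl fun i _ => ?_
            rw [trace_smul, heT i, smul_eq_mul, mul_one]
        _ = D.trace := by rw [hDdec, trace_sum]
        _ = 1 := htr
    have : ((∑ i, lam i : ℝ) : ℂ) = ((1 : ℝ) : ℂ) := by push_cast; push_cast at hC; exact hC
    exact_mod_cast this
  -- lambdas are positive
  have hlampos : ∀ i, 0 < lam i := by
    intro i
    have hDe : (D * e i).trace = (lam i : ℂ) := by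
      have h1 : D * e i = (lam i : ℂ) • e i := by
        rw [hDdec, Finset.sum_mul]
        have : ∀ k, ((lam k : ℂ) • e k) * e i = if k = i then (lam i : ℂ) • e i else 0 := by
          intro k
          rw [smul_mul_assoc, heO k i]
          by_cases h : k = i
          · subst h; simp
          · simp [h]
        rw [Finset.sum_congr rfl fun k _ => this k, Finset.sum_ite_eq' Finset.univ i]
        simp
      rw [h1, trace_smul, heT i, smul_eq_mul, mul_one]
    have hge : 0 ≤ lam i := by
      have := trace_mul_psd_nonneg D (e i) hD (hePSD i)
      rw [hDe] at this
      simpa using this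
    exact lt_of_le_of_ne hge (Ne.symm (hpos i))
  -- mu in terms of b and lam
  have hmueq : ∀ j, mu j = ∑ i, lam i * b i j := by
    intro j
    have hW1 : ((Φ D) * p j).trace = (mu j : ℂ) := by
      rw [hΦDdec, Finset.sum_mul]
      have : ∀ k, ((mu k : ℂ) • p k) * p j = if k = j then (mu j : ℂ) • p j else 0 := by
        intro k
        rw [smul_mul_assoc, hpO k j]
        by_cases h : k = j
        · subst h; simp
        · simp [h]
      rw [Finset.sum_congr rfl fun k _ => this k, Finset.sum_ite_eq' Finset.univ j]
      simp [trace_smul, hpT j]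
    have hW2 : ((Φ D) * p j).trace = ∑ i, (lam i : ℂ) * (b i j : ℂ) := by
      conv_lhs => rw [hDdec]
      rw [map_sum, Finset.sum_mul, trace_sum]
      refine Finset.sum_congr rfl fun i _ => ?_
      rw [Φ.map_smul, smul_mul_assoc, trace_smul, hb i j, smul_eq_mul]
    have hC : ((mu j : ℝ) : ℂ) = ((∑ i, lam i * b i j : ℝ) : ℂ) := by
      rw [← hW1, hW2]; push_cast; rfl
    exact_mod_cast hC
  -- Φ D is Hermitian
  have hherm : (∑ j, (mu j : ℂ) • p j).IsHermitian := by
    unfold Matrix.IsHermitian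
    rw [conjTranspose_sum]
    refine Finset.sum_congr rfl fun j _ => ?_
    rw [conjTranspose_smul, (hpH j).eq]
    congr 1
    simp [Complex.star_def, Complex.conj_ofReal]
  -- entropy equals sum of eta of mu
  have hent : vnEntropy (Φ D) = ∑ j, eta (mu j) := by
    rw [hΦDdec]
    unfold vnEntropy
    rw [dif_pos hherm]
    exact eig_multiset ⟨hpH, hpO, hpS, hpT⟩ mu hherm eta
  -- Jensen: per-column inequality
  have hle : ∀ j, ∑ i, lam i * eta (b i j) ≤ eta (mu j) := by
    intro j
    have h1 : (∑ i, lam i • b i j) = mu j := by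
      rw [hmueq j]; simp [smul_eq_mul]
    have h2 := Real.concaveOn_negMulLog.le_map_sum
      (fun i (_ : i ∈ Finset.univ) => (hlampos i).le) hlamsum
      (fun i (_ : i ∈ Finset.univ) => Set.mem_Ici.mpr (hbnn i j))
    rw [h1] at h2
    rw [eta_eq_negMulLog]
    simpa [smul_eq_mul] using h2
  -- total equality forces per-column equality
  have htot : ∑ j, (∑ i, lam i * eta (b i j)) = ∑ j, eta (mu j) := by
    rw [← hent, ← heq, Finset.sum_comm]
    exact Finset.sum_congr rfl fun i _ => (Finset.mul_sum _ _ _).symm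
  have hjeq : ∀ j, ∑ i, lam i * eta (b i j) = eta (mu j) :=
    fun j => (Finset.sum_eq_sum_iff_of_le fun j _ => hle j).mp htot j (Finset.mem_univ j)
  -- strict concavity: fixed column entries of b are constant
  have hconst : ∀ j i i', b i j = b i' j := by
    intro j i i'
    have h1 : (∑ k, lam k • b k j) = mu j := by
      rw [hmueq j]; simp [smul_eq_mul]
    have h2 : Real.negMulLog (∑ k, lam k • b k j) ≤ ∑ k, lam k • Real.negMulLog (b k j) := by
      rw [h1, ← eta_eq_negMulLog]
      simp only [smul_eq_mul]
      exact (hjeq j).ge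
    exact Real.strictConcaveOn_negMulLog.eq_of_map_sum_eq
      (fun k (_ : k ∈ Finset.univ) => hlampos k) hlamsum
      (fun k (_ : k ∈ Finset.univ) => Set.mem_Ici.mpr (hbnn k j)) h2
      (Finset.mem_univ i) (Finset.mem_univ i')
  -- all entries equal 1/n
  have hbval : ∀ i j, b i j = (n : ℝ)⁻¹ := by
    intro i j
    have h1 : (n : ℝ) * b i j = 1 := by
      calc (n : ℝ) * b i j = ∑ k : Fin n, b i j := by
            rw [Finset.sum_const, Finset.card_univ, Fintype.card_fin, nsmul_eq_mul]
        _ = ∑ k, b k j := Finset.sum_congr rfl fun k _ => (hconst j i k)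
        _ = 1 := hcol j
    field_simp at h1 ⊢
    linarith
  -- mu equals 1/n
  have hmuval : ∀ j, mu j = (n : ℝ)⁻¹ := by
    intro j
    rw [hmueq j]
    calc ∑ i, lam i * b i j = ∑ i, lam i * (n : ℝ)⁻¹ := by
          exact Finset.sum_congr rfl fun i _ => by rw [hbval i j]
      _ = (∑ i, lam i) * (n : ℝ)⁻¹ := by rw [Finset.sum_mul]
      _ = (n : ℝ)⁻¹ := by rw [hlamsum, one_mul]
  refine ⟨?_, ?_, hbval⟩
  · rw [hΦDdec]
    have : ∀ j, ((mu j : ℝ) : ℂ) • p j = ((n : ℂ)⁻¹) • p j := by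
      intro j
      have hc : ((mu j : ℝ) : ℂ) = (n : ℂ)⁻¹ := by rw [hmuval j]; push_cast; rfl
      rw [hc]
    rw [Finset.sum_congr rfl fun j _ => this j, ← Finset.smul_sum, hpS]
  · rw [hent]
    have : ∀ j, eta (mu j) = (n : ℝ)⁻¹ * Real.log n := by
      intro j
      rw [hmuval j, show eta ((n : ℝ)⁻¹) = -(((n : ℝ)⁻¹) * Real.log ((n : ℝ)⁻¹)) from rfl,
        Real.log_inv]
      ring
    rw [Finset.sum_congr rfl fun j _ => this j, Finset.sum_const, Finset.card_univ,
      Fintype.card_fin, nsmul_eq_mul, ← mul_assoc, mul_inv_cancel₀ hnR.ne', one_mul]
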